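/- A maximizer of the joint-diagonalization objective diagonalizes exactly when exact joint diagonalization is possible. Let M₁,…,M_K be symmetric real p×p matrices, and suppose there exists an orthogonal matrix U₀ such that U₀ M_k U₀ᵀ is diagonal for every k. If U is an orthogonal matrix maximizing the objective U' ↦ Σ_{k=1}^K ‖diag(U' M_k U'ᵀ)‖_F² over all orthogonal p×p matrices U' (i.e., Σ_k ‖diag(U' M_k U'ᵀ)‖_F² ≤ Σ_k ‖diag(U M_k Uᵀ)‖_F² for all orthogonal U'), then U M_k Uᵀ is diagonal for every k = 1,…,K. -/

import Mathlib

open Matrix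

/-- A signed permutation matrix: exactly one nonzero entry in each row and each
column, each such entry being `1` or `-1`. -/
def IsSignedPerm {p : ℕ} (Q : Matrix (Fin p) (Fin p) ℝ) : Prop :=
  (∀ i, ∃! j, Q i j ≠ 0) ∧ (∀ j, ∃! i, Q i j ≠ 0) ∧
  (∀ i j, Q i j ≠ 0 → Q i j = 1 ∨ Q i j = -1)

/-- A generalized permutation matrix: exactly one nonzero entry in each row and
each column. -/
def IsGenPerm {p : ℕ} (Q : Matrix (Fin p) (Fin p) ℝ) : Prop :=
  (∀ i, ∃! j, Q i j ≠ 0) ∧ (∀ j, ∃! i, Q i j ≠ 0)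

open scoped Classical in
/-- For a symmetric positive (semi)definite matrix `M`, `invSqrt M` is the inverse
of its unique positive semidefinite square root, i.e. `M^{-1/2}`. -/
noncomputable def invSqrt {p : ℕ} (M : Matrix (Fin p) (Fin p) ℝ) : Matrix (Fin p) (Fin p) ℝ :=
  if h : M.PosSemidef then
    ((h.1.eigenvectorUnitary : Matrix (Fin p) (Fin p) ℝ) * diagonal (Real.sqrt ∘ h.1.eigenvalues) *
      (star h.1.eigenvectorUnitary : Matrix (Fin p) (Fin p) ℝ))⁻¹ else 0

/-- Sum of squared entries as a trace. -/
lemma sq_sum_eq_trace {p : ℕ} (B : Matrix (Fin p) (Fin p) ℝ) :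
    ∑ i, ∑ j, (B i j) ^ 2 = Matrix.trace (B * Bᵀ) := by
  simp [Matrix.trace, Matrix.mul_apply, Matrix.diag, sq]

/-- Frobenius norm invariance under orthogonal conjugation. -/
lemma frob_invariant {p : ℕ} (V A : Matrix (Fin p) (Fin p) ℝ) (hV : V * Vᵀ = 1) :
    ∑ i, ∑ j, ((V * A * Vᵀ) i j) ^ 2 = ∑ i, ∑ j, (A i j) ^ 2 := by
  have hV' : Vᵀ * V = 1 := mul_eq_one_comm.mp hV
  rw [sq_sum_eq_trace, sq_sum_eq_trace]
  have : (V * A * Vᵀ) * (V * A * Vᵀ)ᵀ = V * (A * Aᵀ) * Vᵀ := by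
    simp only [Matrix.transpose_mul, Matrix.transpose_transpose, Matrix.mul_assoc]
    rw [← Matrix.mul_assoc Vᵀ V, hV', Matrix.one_mul]
  rw [this, Matrix.trace_mul_cycle, ← Matrix.mul_assoc, hV', one_mul]

/-- A maximizer of the joint-diagonalization objective diagonalizes exactly
when exact joint diagonalization is possible. -/
theorem maximizer_diagonalizes {p K : ℕ}
    (M : Fin K → Matrix (Fin p) (Fin p) ℝ)
    (hsym : ∀ k, (M k).IsSymm)
    (U₀ : Matrix (Fin p) (Fin p) ℝ) (hU₀ : U₀ * U₀ᵀ = 1)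
    (hU₀diag : ∀ k, (U₀ * M k * U₀ᵀ).IsDiag)
    (U : Matrix (Fin p) (Fin p) ℝ) (hU : U * Uᵀ = 1)
    (hmax : ∀ U' : Matrix (Fin p) (Fin p) ℝ, U' * U'ᵀ = 1 →
      ∑ k, ∑ i, ((U' * M k * U'ᵀ) i i) ^ 2 ≤ ∑ k, ∑ i, ((U * M k * Uᵀ) i i) ^ 2) :
    ∀ k, (U * M k * Uᵀ).IsDiag := by
  set N : Fin K → Matrix (Fin p) (Fin p) ℝ := fun k => U * M k * Uᵀ with hN
  -- the diagonal sum of U₀'s conjugates equals the full Frobenius sum of N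
  have hdiag0 : ∀ k, ∑ i, ((U₀ * M k * U₀ᵀ) i i) ^ 2
      = ∑ i, ∑ j, ((U₀ * M k * U₀ᵀ) i j) ^ 2 := by
    intro k
    refine Finset.sum_congr rfl fun i _ => ?_
    rw [Finset.sum_eq_single i]
    · intro j _ hj
      rw [(hU₀diag k) (Ne.symm hj)]; ring
    · intro h; exact absurd (Finset.mem_univ i) h
  have hfull : ∑ k, ∑ i, ∑ j, (N k i j) ^ 2
      = ∑ k, ∑ i, ((U₀ * M k * U₀ᵀ) i i) ^ 2 := by
    refine Finset.sum_congr rfl fun k _ => ?_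
    rw [hdiag0 k, frob_invariant U (M k) hU, frob_invariant U₀ (M k) hU₀]
  have hle1 : ∑ k, ∑ i, ∑ j, (N k i j) ^ 2 ≤ ∑ k, ∑ i, (N k i i) ^ 2 := by
    rw [hfull]; exact hmax U₀ hU₀
  have termle : ∀ k i, (N k i i) ^ 2 ≤ ∑ j, (N k i j) ^ 2 := fun k i =>
    Finset.single_le_sum (f := fun j => (N k i j) ^ 2) (fun j _ => sq_nonneg _) (Finset.mem_univ i)
  have hle2 : ∑ k, ∑ i, (N k i i) ^ 2 ≤ ∑ k, ∑ i, ∑ j, (N k i j) ^ 2 :=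
    Finset.sum_le_sum fun k _ => Finset.sum_le_sum fun i _ => termle k i
  have heq : ∑ k, ∑ i, (N k i i) ^ 2 = ∑ k, ∑ i, ∑ j, (N k i j) ^ 2 :=
    le_antisymm hle2 hle1
  have heqk : ∀ k ∈ Finset.univ, ∑ i, (N k i i) ^ 2 = ∑ i, ∑ j, (N k i j) ^ 2 :=
    (Finset.sum_eq_sum_iff_of_le (fun k _ =>
      Finset.sum_le_sum fun i _ => termle k i)).mp heq
  intro k
  intro i j hij
  have heqi : ∀ i ∈ Finset.univ, ((N k i i) ^ 2 : ℝ) = ∑ j, (N k i j) ^ 2 :=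
    (Finset.sum_eq_sum_iff_of_le (fun i _ => termle k i)).mp (heqk k (Finset.mem_univ k))
  have h := heqi i (Finset.mem_univ i)
  rw [← Finset.add_sum_erase _ _ (Finset.mem_univ i)] at h
  have hz : ∑ j ∈ Finset.univ.erase i, (N k i j) ^ 2 = 0 := by linarith
  have := (Finset.sum_eq_zero_iff_of_nonneg (fun j _ => sq_nonneg (N k i j))).mp hz
    j (Finset.mem_erase.mpr ⟨Ne.symm hij, Finset.mem_univ j⟩)
  exact pow_eq_zero_iff (by norm_num) |>.mp this
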